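/- Let p, q, k, m, c be real numbers with c·(p+q) ≠ 0 and c + k = 4k²m, let a₀ ∈ ℝ, and define u(x,y,t) = a₀ + (12km/(c(p+q)))·coth(ct + kx + my). Then u satisfies the shallow water wave equation u_{xt} + u_{xx} = u_{xxxy} + p·u_x·u_{xt} + q·u_t·u_{xx} at every point (x,y,t) ∈ ℝ³ with ct + kx + my ≠ 0. -/

import Mathlib

noncomputable def coth (x : ℝ) : ℝ := Real.cosh x / Real.sinh x

lemma hdc0 : ∀ z : ℝ, z ≠ 0 → HasDerivAt coth (1 - coth z ^ 2) z := by
  intro z hz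
  have hs : Real.sinh z ≠ 0 := Real.sinh_ne_zero.mpr hz
  have h := (Real.hasDerivAt_cosh z).div (Real.hasDerivAt_sinh z) hs
  refine h.congr_deriv ?_
  unfold coth
  field_simp

lemma hdc1 : ∀ z : ℝ, z ≠ 0 →
    HasDerivAt (fun w => 1 - coth w ^ 2) ((-2 * coth z) * (1 - coth z ^ 2)) z := by
  intro z hz
  have h := ((hdc0 z hz).pow 2).const_sub 1
  refine h.congr_deriv ?_
  ring

lemma hdc2 : ∀ z : ℝ, z ≠ 0 →
    HasDerivAt (fun w => (-2 * coth w) * (1 - coth w ^ 2))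
      ((6 * coth z ^ 2 - 2) * (1 - coth z ^ 2)) z := by
  intro z hz
  have h := ((hdc0 z hz).const_mul (-2)).mul (hdc1 z hz)
  refine h.congr_deriv ?_
  ring

lemma hdc3 : ∀ z : ℝ, z ≠ 0 →
    HasDerivAt (fun w => (6 * coth w ^ 2 - 2) * (1 - coth w ^ 2))
      ((16 * coth z - 24 * coth z ^ 3) * (1 - coth z ^ 2)) z := by
  intro z hz
  have h := (((hdc0 z hz).pow 2).const_mul 6 |>.sub_const 2).mul (hdc1 z hz)
  refine h.congr_deriv ?_
  simp only [Pi.pow_apply]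
  ring

lemma hasDerivAt_affine (g g' : ℝ → ℝ) (hg : ∀ z, z ≠ 0 → HasDerivAt g (g' z) z)
    (D C α β z : ℝ) (h : α * z + β ≠ 0) :
    HasDerivAt (fun s => D + C * g (α * s + β)) (C * α * g' (α * z + β)) z := by
  have haff : HasDerivAt (fun s : ℝ => α * s + β) α z := by
    simpa using ((hasDerivAt_id z).const_mul α).add_const β
  have h2 := (((hg _ h).comp z haff).const_mul C).const_add D
  refine h2.congr_deriv ?_
  ring

lemma deriv_of_eventually (F g g' : ℝ → ℝ) (hg : ∀ z, z ≠ 0 → HasDerivAt g (g' z) z)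
    (D C α β : ℝ) (hF : ∀ z, α * z + β ≠ 0 → F z = D + C * g (α * z + β))
    (z : ℝ) (h : α * z + β ≠ 0) :
    deriv F z = C * α * g' (α * z + β) := by
  have hcont : Continuous fun w : ℝ => α * w + β := by continuity
  have hopen : IsOpen {w : ℝ | α * w + β ≠ 0} := isOpen_compl_singleton.preimage hcont
  have hev : F =ᶠ[nhds z] fun s => D + C * g (α * s + β) :=
    Filter.eventuallyEq_of_mem (hopen.mem_nhds h) hF
  rw [hev.deriv_eq, (hasDerivAt_affine g g' hg D C α β z h).deriv]

theorem coth_solution_of_SWW (p q k m c a₀ : ℝ)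
    (h1 : c * (p + q) ≠ 0) (h2 : c + k = 4 * k ^ 2 * m)
    (u : ℝ → ℝ → ℝ → ℝ)
    (hu : ∀ x y t : ℝ,
      u x y t = a₀ + (12 * k * m / (c * (p + q))) * coth (c * t + k * x + m * y)) :
    ∀ x y t : ℝ, c * t + k * x + m * y ≠ 0 →
      deriv (fun x' : ℝ => deriv (fun t' : ℝ => u x' y t') t) x
          + deriv (deriv (fun x' : ℝ => u x' y t)) x =
        deriv (deriv (deriv (fun x' : ℝ => deriv (fun y' : ℝ => u x' y' t) y))) x
          + p * deriv (fun x' : ℝ => u x' y t) x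
              * deriv (fun x' : ℝ => deriv (fun t' : ℝ => u x' y t') t) x
          + q * deriv (fun t' : ℝ => u x y t') t
              * deriv (deriv (fun x' : ℝ => u x' y t)) x := by
  intro x y t hs₀
  set A : ℝ := 12 * k * m / (c * (p + q)) with hA
  have hcx : ∀ x' : ℝ, k * x' + (c * t + m * y) = c * t + k * x' + m * y := by
    intro x'; ring
  have hx0 : k * x + (c * t + m * y) ≠ 0 := by rw [hcx]; exact hs₀
  -- u as function of x'
  have hux_fun : ∀ x' : ℝ, u x' y t = a₀ + A * coth (k * x' + (c * t + m * y)) := by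
    intro x'; rw [hu, hcx]
  -- u_x
  have hux : deriv (fun x' => u x' y t) x
      = A * k * (1 - coth (c * t + k * x + m * y) ^ 2) := by
    have h := hasDerivAt_affine coth _ hdc0 a₀ A k (c * t + m * y) x hx0
    rw [show (fun x' => u x' y t) = fun x' => a₀ + A * coth (k * x' + (c * t + m * y))
        from funext hux_fun, h.deriv, hcx]
  -- u_t
  have hut : deriv (fun t' => u x y t') t
      = A * c * (1 - coth (c * t + k * x + m * y) ^ 2) := by
    have h := hasDerivAt_affine coth _ hdc0 a₀ A c (k * x + m * y) t (by
      rw [show c * t + (k * x + m * y) = c * t + k * x + m * y by ring]; exact hs₀)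
    rw [show (fun t' => u x y t') = fun t' => a₀ + A * coth (c * t' + (k * x + m * y))
        from funext fun t' => by rw [hu]; ring_nf, h.deriv,
      show c * t + (k * x + m * y) = c * t + k * x + m * y by ring]
  -- u_xt
  have hFxt : ∀ x' : ℝ, k * x' + (c * t + m * y) ≠ 0 →
      deriv (fun t' => u x' y t') t
        = 0 + (A * c) * (1 - coth (k * x' + (c * t + m * y)) ^ 2) := by
    intro x' hx'
    have h := hasDerivAt_affine coth _ hdc0 a₀ A c (k * x' + m * y) t (by
      rw [show c * t + (k * x' + m * y) = k * x' + (c * t + m * y) by ring]; exact hx')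
    rw [show (fun t' => u x' y t') = fun t' => a₀ + A * coth (c * t' + (k * x' + m * y))
        from funext fun t' => by rw [hu]; ring_nf, h.deriv,
      show c * t + (k * x' + m * y) = k * x' + (c * t + m * y) by ring]
    ring
  have huxt : deriv (fun x' => deriv (fun t' => u x' y t') t) x
      = (A * c) * k * ((-2 * coth (c * t + k * x + m * y))
          * (1 - coth (c * t + k * x + m * y) ^ 2)) := by
    have h := deriv_of_eventually _ _ _ hdc1 0 (A * c) k (c * t + m * y) hFxt x hx0
    rw [h, hcx]
  -- u_xx
  have hFxx : ∀ x' : ℝ, k * x' + (c * t + m * y) ≠ 0 →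
      deriv (fun x'' => u x'' y t) x'
        = 0 + (A * k) * (1 - coth (k * x' + (c * t + m * y)) ^ 2) := by
    intro x' hx'
    have h := hasDerivAt_affine coth _ hdc0 a₀ A k (c * t + m * y) x' hx'
    rw [show (fun x'' => u x'' y t) = fun x'' => a₀ + A * coth (k * x'' + (c * t + m * y))
        from funext hux_fun, h.deriv]
    ring
  have huxx : deriv (deriv (fun x' => u x' y t)) x
      = (A * k) * k * ((-2 * coth (c * t + k * x + m * y))
          * (1 - coth (c * t + k * x + m * y) ^ 2)) := by
    have h := deriv_of_eventually _ _ _ hdc1 0 (A * k) k (c * t + m * y) hFxx x hx0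
    rw [h, hcx]
  -- u_xxxy
  have hFy : ∀ x' : ℝ, k * x' + (c * t + m * y) ≠ 0 →
      deriv (fun y' => u x' y' t) y
        = 0 + (A * m) * (1 - coth (k * x' + (c * t + m * y)) ^ 2) := by
    intro x' hx'
    have h := hasDerivAt_affine coth _ hdc0 a₀ A m (c * t + k * x') y (by
      rw [show m * y + (c * t + k * x') = k * x' + (c * t + m * y) by ring]; exact hx')
    rw [show (fun y' => u x' y' t) = fun y' => a₀ + A * coth (m * y' + (c * t + k * x'))
        from funext fun y' => by rw [hu]; ring_nf, h.deriv,
      show m * y + (c * t + k * x') = k * x' + (c * t + m * y) by ring]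
    ring
  have hFxy : ∀ x' : ℝ, k * x' + (c * t + m * y) ≠ 0 →
      deriv (fun x'' => deriv (fun y' => u x'' y' t) y) x'
        = 0 + (A * m * k) * ((-2 * coth (k * x' + (c * t + m * y)))
            * (1 - coth (k * x' + (c * t + m * y)) ^ 2)) := by
    intro x' hx'
    have h := deriv_of_eventually _ _ _ hdc1 0 (A * m) k (c * t + m * y) hFy x' hx'
    rw [h]; ring
  have hFxxy : ∀ x' : ℝ, k * x' + (c * t + m * y) ≠ 0 →
      deriv (deriv (fun x'' => deriv (fun y' => u x'' y' t) y)) x'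
        = 0 + (A * m * k * k) * ((6 * coth (k * x' + (c * t + m * y)) ^ 2 - 2)
            * (1 - coth (k * x' + (c * t + m * y)) ^ 2)) := by
    intro x' hx'
    have h := deriv_of_eventually _ _ _ hdc2 0 (A * m * k) k (c * t + m * y) hFxy x' hx'
    rw [h]; ring
  have huxxxy : deriv (deriv (deriv (fun x' => deriv (fun y' => u x' y' t) y))) x
      = (A * m * k * k) * k * ((16 * coth (c * t + k * x + m * y)
          - 24 * coth (c * t + k * x + m * y) ^ 3)
          * (1 - coth (c * t + k * x + m * y) ^ 2)) := by
    have h := deriv_of_eventually _ _ _ hdc3 0 (A * m * k * k) k (c * t + m * y) hFxxy x hx0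
    rw [h, hcx]
  rw [hux, hut, huxt, huxx, huxxxy]
  have hc : c ≠ 0 := fun h => h1 (by rw [h]; ring)
  have hpq : p + q ≠ 0 := fun h => h1 (by rw [h]; ring)
  set T : ℝ := coth (c * t + k * x + m * y) with hT
  have hAc : A * (c * (p + q)) = 12 * k * m := by rw [hA]; field_simp
  clear_value A T
  linear_combination (A * k * (-2 * T * (1 - T ^ 2))) * h2
    - (A * k ^ 2 * (1 - T ^ 2) * (-2 * T * (1 - T ^ 2))) * hAc
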